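/- The following are equivalent: (1) the cofinality of the meager ideal on the reals is ℵ₁; (2) the cofinality of the nowhere dense ideal is ℵ₁, i.e., there is a family of ℵ₁ perfect nowhere dense trees on {0,1} such that every nowhere dense tree is contained in one of them. -/

import Mathlib

noncomputable section

/-- A (prefix-closed) tree on `{0,1}`. -/
def IsTree (T : Set (List Bool)) : Prop := ∀ s ∈ T, ∀ t : List Bool, t <+: s → t ∈ T

/-- A perfect tree: nonempty and every node has two incomparable extensions in the tree. -/
def PerfectTree (T : Set (List Bool)) : Prop :=
  T.Nonempty ∧ IsTree T ∧
    ∀ s ∈ T, ∃ t₁ ∈ T, ∃ t₂ ∈ T, s <+: t₁ ∧ s <+: t₂ ∧ ¬ t₁ <+: t₂ ∧ ¬ t₂ <+: t₁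

/-- A nowhere dense tree: every finite sequence has an extension outside the tree. -/
def NwdTree (T : Set (List Bool)) : Prop := ∀ s : List Bool, ∃ t, s <+: t ∧ t ∉ T

namespace CantorAux

/-- restriction of `x : ℕ → Bool` to its first `k` values, as a list -/
def res (x : ℕ → Bool) (k : ℕ) : List Bool := (List.range k).map x

@[simp] lemma length_res (x : ℕ → Bool) (k : ℕ) : (res x k).length = k := by
  simp [res]

lemma res_getElem (x : ℕ → Bool) {k i : ℕ} (h : i < k) :
    (res x k)[i]'(by simpa using h) = x i := by
  simp [res]

lemma res_prefix (x : ℕ → Bool) {j k : ℕ} (h : j ≤ k) : res x j <+: res x k := by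
  rw [List.prefix_iff_eq_take]
  simp [res, ← List.map_take, List.take_range, Nat.min_eq_left h]

lemma res_eq_iff {x : ℕ → Bool} {s : List Bool} :
    res x s.length = s ↔ ∀ i (h : i < s.length), x i = s[i] := by
  constructor
  · intro h i hi
    rw [← res_getElem x hi]
    congr 1
  · intro h
    apply List.ext_getElem (by simp)
    intro i h1 h2
    rw [res_getElem x (by simpa using h1)]
    exact h i h2

/-- the basic cylinder determined by a finite sequence -/
def Cyl (s : List Bool) : Set (ℕ → Bool) := {x | res x s.length = s}

lemma mem_Cyl {x : ℕ → Bool} {s : List Bool} :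
    x ∈ Cyl s ↔ ∀ i (h : i < s.length), x i = s[i] := res_eq_iff

lemma res_mem_Cyl_self (x : ℕ → Bool) (k : ℕ) : x ∈ Cyl (res x k) := by
  simp [Cyl]

/-- extend a finite list by `false`s to a point of Cantor space -/
def ext0 (s : List Bool) : ℕ → Bool := fun i => s.getD i false

lemma res_ext0 (s : List Bool) {k : ℕ} (hk : k ≤ s.length) : res (ext0 s) k = s.take k := by
  apply List.ext_getElem (by simpa using hk)
  intro i h1 h2
  rw [res_getElem _ (by simpa using h1)]
  simp [ext0, List.getD_eq_getElem?_getD, List.getElem?_eq_getElem (lt_of_lt_of_le (by simpa using h1) hk)]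

lemma ext0_mem_Cyl (s : List Bool) : ext0 s ∈ Cyl s := by
  simp [Cyl, res_ext0 s (le_refl _)]

lemma Cyl_nonempty (s : List Bool) : (Cyl s).Nonempty := ⟨ext0 s, ext0_mem_Cyl s⟩

lemma Cyl_mono {s t : List Bool} (h : s <+: t) : Cyl t ⊆ Cyl s := by
  intro x hx
  rw [mem_Cyl] at hx ⊢
  intro i hi
  rw [h.getElem hi]
  exact hx i (lt_of_lt_of_le hi h.length_le)

lemma prefix_of_mem_Cyl {x : ℕ → Bool} {s : List Bool} (h : x ∈ Cyl s) (k : ℕ)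
    (hk : s.length ≤ k) : s <+: res x k := by
  rw [List.prefix_iff_eq_take]
  apply List.ext_getElem (by simpa using hk)
  intro i h1 h2
  rw [mem_Cyl] at h
  rw [List.getElem_take, res_getElem x (lt_of_lt_of_le h1 hk)]
  exact (h i h1).symm

lemma isOpen_Cyl (s : List Bool) : IsOpen (Cyl s) := by
  have : Cyl s = ⋂ (i : Fin s.length), (fun x : ℕ → Bool => x i) ⁻¹' {s[i]} := by
    ext x; simp [mem_Cyl, Fin.forall_iff]
  rw [this]
  exact isOpen_iInter_of_finite fun i =>
    (continuous_apply (i : ℕ)).isOpen_preimage _ (isOpen_discrete _)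

lemma exists_res_subset_of_isOpen {U : Set (ℕ → Bool)} (hU : IsOpen U) {x : ℕ → Bool}
    (hx : x ∈ U) : ∃ k, Cyl (res x k) ⊆ U := by
  rw [isOpen_pi_iff] at hU
  obtain ⟨I, u, hu, hsub⟩ := hU x hx
  refine ⟨(I.sup id) + 1, fun y hy => hsub ?_⟩
  intro i hi
  rw [mem_Cyl] at hy
  have hik : i < I.sup id + 1 := Nat.lt_succ_of_le (Finset.le_sup (f := id) hi)
  have := hy i (by simpa using hik)
  rw [res_getElem x hik] at this
  rw [this]
  exact (hu i hi).2

/-- A closed-with-avoidance predicate: every node has an extension whose cylinder misses C. -/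
def AvoidP (C : Set (ℕ → Bool)) : Prop := ∀ s : List Bool, ∃ t, s <+: t ∧ Cyl t ∩ C = ∅

lemma isNowhereDense_of_avoidP {C : Set (ℕ → Bool)} (hC : IsClosed C) (h : AvoidP C) :
    IsNowhereDense C := by
  rw [hC.isNowhereDense_iff]
  rw [Set.eq_empty_iff_forall_notMem]
  intro x hx
  obtain ⟨k, hk⟩ := exists_res_subset_of_isOpen isOpen_interior hx
  obtain ⟨t, hpre, hdisj⟩ := h (res x k)
  obtain ⟨y, hy⟩ := Cyl_nonempty t
  have : y ∈ C := interior_subset (hk (Cyl_mono hpre hy))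
  rw [Set.eq_empty_iff_forall_notMem] at hdisj
  exact hdisj y ⟨hy, this⟩

lemma avoidP_of_isNowhereDense {C : Set (ℕ → Bool)} (hC : IsClosed C)
    (h : IsNowhereDense C) : AvoidP C := by
  intro s
  have hint : interior C = ∅ := (hC.isNowhereDense_iff).mp h
  have : ¬ (Cyl s ⊆ C) := by
    intro hsub
    have : Cyl s ⊆ interior C := (isOpen_Cyl s).subset_interior_iff.mpr hsub
    obtain ⟨y, hy⟩ := Cyl_nonempty s
    rw [hint] at this
    exact this hy
  obtain ⟨x, hxc, hxn⟩ := Set.not_subset.mp this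
  obtain ⟨k, hk⟩ := exists_res_subset_of_isOpen hC.isOpen_compl hxn
  refine ⟨res x (max k s.length), ?_, ?_⟩
  · have hs : s = res x s.length := hxc.symm
    calc s = res x s.length := hs
    _ <+: res x (max k s.length) := res_prefix x (le_max_right _ _)
  · rw [Set.eq_empty_iff_forall_notMem]
    intro y ⟨hy1, hy2⟩
    exact hk (Cyl_mono (res_prefix x (le_max_left _ _)) hy1) hy2

/-- The set of branches through a set of nodes. -/
def Br (V : Set (List Bool)) : Set (ℕ → Bool) := {x | ∀ k, res x k ∈ V}

lemma isClosed_Br (V : Set (List Bool)) : IsClosed (Br V) := by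
  rw [← isOpen_compl_iff]
  rw [isOpen_iff_forall_mem_open]
  intro x hx
  simp only [Set.mem_compl_iff, Br, Set.mem_setOf_eq, not_forall] at hx
  obtain ⟨k, hk⟩ := hx
  refine ⟨Cyl (res x k), ?_, isOpen_Cyl _, res_mem_Cyl_self x k⟩
  intro y hy
  simp only [Set.mem_compl_iff, Br, Set.mem_setOf_eq, not_forall]
  exact ⟨k, by rwa [show res y k = res x k from by simpa [Cyl] using hy]⟩

lemma avoidP_Br {V : Set (List Bool)} (hV : NwdTree V) : AvoidP (Br V) := by
  intro s
  obtain ⟨t, hpre, ht⟩ := hV s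
  refine ⟨t, hpre, Set.eq_empty_iff_forall_notMem.mpr fun y ⟨hy1, hy2⟩ => ?_⟩
  exact ht (by rw [show t = res y t.length from hy1.symm]; exact hy2 t.length)

lemma isNowhereDense_Br {V : Set (List Bool)} (hV : NwdTree V) : IsNowhereDense (Br V) :=
  isNowhereDense_of_avoidP (isClosed_Br V) (avoidP_Br hV)

lemma isMeagre_Br {V : Set (List Bool)} (hV : NwdTree V) : IsMeagre (Br V) := by
  rw [isMeagre_iff_countable_union_isNowhereDense]
  exact ⟨{Br V}, by simpa using isNowhereDense_Br hV, Set.countable_singleton _, by simp⟩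

/-- the "touching tree" of a set: nodes whose cylinder meets C -/
def tch (C : Set (ℕ → Bool)) : Set (List Bool) := {s | (Cyl s ∩ C).Nonempty}

lemma isTree_tch (C : Set (ℕ → Bool)) : IsTree (tch C) := by
  intro s hs t hts
  obtain ⟨x, hx1, hx2⟩ := hs
  exact ⟨x, Cyl_mono hts hx1, hx2⟩

lemma nwdTree_tch {C : Set (ℕ → Bool)} (h : AvoidP C) : NwdTree (tch C) := by
  intro s
  obtain ⟨t, hpre, hdisj⟩ := h s
  exact ⟨t, hpre, by simp [tch, Set.not_nonempty_iff_eq_empty, hdisj]⟩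

lemma prefix_of_prefix_append {u a b : List Bool} (h : u <+: a ++ b) (hl : u.length ≤ a.length) :
    u <+: a := by
  rw [List.prefix_iff_eq_take]
  apply List.ext_getElem (by simp [min_eq_left hl])
  intro i h1 h2
  rw [List.getElem_take]
  rw [h.getElem h1]
  exact List.getElem_append_left (lt_of_lt_of_le h1 hl)

/-- zero-padding hull of a tree -/
def pad0 (T : Set (List Bool)) : Set (List Bool) :=
  {u | ∃ s ∈ T, ∃ k, u <+: s ++ List.replicate k false}

lemma isTree_pad0 (T : Set (List Bool)) : IsTree (pad0 T) := by
  intro s ⟨s₀, hs₀, k, hk⟩ t ht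
  exact ⟨s₀, hs₀, k, ht.trans hk⟩

lemma subset_pad0 (T : Set (List Bool)) : T ⊆ pad0 T :=
  fun s hs => ⟨s, hs, 0, by simp⟩

lemma nwdTree_pad0 {T : Set (List Bool)} (hT : IsTree T) (hnwd : NwdTree T) :
    NwdTree (pad0 T) := by
  intro s
  obtain ⟨t, hpre, ht⟩ := hnwd s
  refine ⟨t ++ [true], hpre.trans (List.prefix_append _ _), ?_⟩
  rintro ⟨s₀, hs₀, k, hk⟩
  by_cases hlen : t.length < s₀.length
  · exact ht (hT s₀ hs₀ t (prefix_of_prefix_append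
      ((List.prefix_append t [true]).trans hk) (le_of_lt hlen)))
  · push_neg at hlen
    have hil : t.length < (t ++ [true]).length := by simp
    have h1 : (t ++ [true])[t.length]'hil = true := by simp
    have h2 := hk.getElem hil
    rw [h1] at h2
    have hil2 : t.length < (s₀ ++ List.replicate k false).length :=
      lt_of_lt_of_le hil hk.length_le
    rw [List.getElem_append_right hlen] at h2
    simp at h2

lemma ext0_append_replicate (s : List Bool) (k : ℕ) :
    ext0 (s ++ List.replicate k false) = ext0 s := by
  funext i
  simp only [ext0, List.getD_eq_getElem?_getD]
  rcases lt_or_ge i s.length with h | h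
  · rw [List.getElem?_append_left h]
  · rw [List.getElem?_eq_none (l := s) h]
    rcases lt_or_ge i (s.length + k) with h2 | h2
    · rw [List.getElem?_eq_getElem (by simpa using h2), List.getElem_append_right h]
      simp
    · rw [List.getElem?_eq_none (by simpa using h2)]

lemma ext0_mem_Br_pad0 {T : Set (List Bool)} {s : List Bool} (hs : s ∈ T) :
    ext0 s ∈ Br (pad0 T) := by
  intro j
  refine ⟨s, hs, j, ?_⟩
  have : res (ext0 s) j = res (ext0 (s ++ List.replicate j false)) j := by
    rw [ext0_append_replicate]
  rw [this, res_ext0 _ (by simp)]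
  exact List.take_prefix _ _

lemma pad0_subset_tch {T : Set (List Bool)} {D : Set (ℕ → Bool)}
    (hD : Br (pad0 T) ⊆ D) : pad0 T ⊆ tch D := by
  rintro u ⟨s, hs, k, hk⟩
  have hx : ext0 s ∈ Br (pad0 T) := ext0_mem_Br_pad0 hs
  refine ⟨ext0 s, ?_, hD hx⟩
  have : ext0 s ∈ Cyl (s ++ List.replicate k false) := by
    rw [← ext0_append_replicate s k]; exact ext0_mem_Cyl _
  exact Cyl_mono hk this

/-- no two consecutive `true`s -/
def No11 (w : List Bool) : Prop :=
  ∀ i (h : i + 1 < w.length), w[i]'(by omega) = false ∨ w[i+1]'h = false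

lemma no11_append_pair {w : List Bool} (hw : No11 w) (b : Bool) : No11 (w ++ [false, b]) := by
  intro i h
  simp only [List.length_append, List.length_cons, List.length_nil] at h
  rcases lt_trichotomy (i+1) w.length with h1 | h1 | h1
  · rw [List.getElem_append_left (by omega), List.getElem_append_left h1]
    exact hw i h1
  · right
    rw [List.getElem_append_right (le_of_eq h1.symm)]
    have h2 : i + 1 - w.length = 0 := by omega
    simp [h2]
  · left
    rw [List.getElem_append_right (show w.length ≤ i by omega)]
    have h2 : i - w.length = 0 := by omega
    simp [h2]

/-- perfect hull of a tree -/
def hull (V : Set (List Bool)) : Set (List Bool) :=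
  {u | ∃ s w, (s ∈ V ∨ s = []) ∧ No11 w ∧ u <+: s ++ w}

lemma isTree_hull (V : Set (List Bool)) : IsTree (hull V) := by
  rintro s ⟨s₀, w, h1, h2, h3⟩ t ht
  exact ⟨s₀, w, h1, h2, ht.trans h3⟩

lemma subset_hull (V : Set (List Bool)) : V ⊆ hull V :=
  fun s hs => ⟨s, [], Or.inl hs, by intro i h; simp at h, by simp⟩

lemma perfectTree_hull (V : Set (List Bool)) : PerfectTree (hull V) := by
  refine ⟨⟨[], [], [], Or.inr rfl, by intro i h; simp at h, by simp⟩, isTree_hull V, ?_⟩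
  rintro u ⟨s, w, h1, h2, h3⟩
  have m1 : s ++ (w ++ [false, false]) ∈ hull V := ⟨s, w ++ [false, false], h1, no11_append_pair h2 false, List.prefix_refl _⟩
  have m2 : s ++ (w ++ [false, true]) ∈ hull V := ⟨s, w ++ [false, true], h1, no11_append_pair h2 true, List.prefix_refl _⟩
  refine ⟨_, m1, _, m2, h3.trans (by rw [← List.append_assoc]; exact List.prefix_append _ _),
    h3.trans (by rw [← List.append_assoc]; exact List.prefix_append _ _), ?_, ?_⟩
  · intro hp
    have he := hp.eq_of_length (by simp)
    have := List.append_cancel_left (List.append_cancel_left he)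
    simp at this
  · intro hp
    have he := hp.eq_of_length (by simp)
    have := List.append_cancel_left (List.append_cancel_left he)
    simp at this

lemma nwdTree_hull {V : Set (List Bool)} (hV : IsTree V) (hnwd : NwdTree V) :
    NwdTree (hull V) := by
  intro s
  obtain ⟨t, hpre, ht⟩ := hnwd (s ++ [false])
  have htne : t ≠ [] := by
    intro h
    have := hpre.length_le
    simp [h] at this
  refine ⟨t ++ [true, true, true, true],
    ((List.prefix_append s [false]).trans hpre).trans (List.prefix_append _ _), ?_⟩
  rintro ⟨s₀, w, h1, h2, h3⟩
  by_cases hlen : t.length ≤ s₀.length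
  · have hts : t <+: s₀ :=
      prefix_of_prefix_append (((List.prefix_append t _).trans h3)) hlen
    rcases h1 with h1 | h1
    · exact ht (hV s₀ h1 t hts)
    · rw [h1] at hts
      exact htne (List.prefix_nil.mp hts)
  · push_neg at hlen
    have hl1 : t.length + 1 < (t ++ [true,true,true,true]).length := by simp
    have g1 : (t ++ [true,true,true,true])[t.length]'(by omega) = true := by
      rw [List.getElem_append_right (le_refl _)]; simp
    have g2 : (t ++ [true,true,true,true])[t.length + 1]'hl1 = true := by
      rw [List.getElem_append_right (by omega)]
      have : t.length + 1 - t.length = 1 := by omega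
      simp [this]
    have e1 := h3.getElem (i := t.length) (by omega)
    have e2 := h3.getElem (i := t.length + 1) hl1
    rw [g1] at e1; rw [g2] at e2
    have hlw : t.length + 1 < (s₀ ++ w).length := lt_of_lt_of_le hl1 h3.length_le
    have hs₀t : s₀.length ≤ t.length := by omega
    rw [List.getElem_append_right hs₀t] at e1
    rw [List.getElem_append_right (by omega)] at e2
    simp only [show t.length + 1 - s₀.length = (t.length - s₀.length) + 1 from by omega] at e2
    have := h2 (t.length - s₀.length) (by simp at hlw ⊢; omega)
    rw [e1.symm, e2.symm] at this
    simp at this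

lemma avoidP_union {C D : Set (ℕ → Bool)} (hC : AvoidP C) (hD : AvoidP D) :
    AvoidP (C ∪ D) := by
  intro s
  obtain ⟨t₁, h1, h2⟩ := hC s
  obtain ⟨t₂, h3, h4⟩ := hD t₁
  refine ⟨t₂, h1.trans h3, ?_⟩
  rw [Set.inter_union_distrib_left, h4, Set.union_empty, Set.eq_empty_iff_forall_notMem]
  intro x ⟨hx1, hx2⟩
  rw [Set.eq_empty_iff_forall_notMem] at h2
  exact h2 x ⟨Cyl_mono h3 hx1, hx2⟩

lemma exists_avoid_finset {C : Set (ℕ → Bool)} (hC : AvoidP C) (S : Finset (List Bool)) :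
    ∃ w : List Bool, ∀ s ∈ S, Cyl (s ++ w) ∩ C = ∅ := by
  classical
  induction S using Finset.induction_on with
  | empty => exact ⟨[], by simp⟩
  | insert s S' hnotmem ih =>
    obtain ⟨w', hw'⟩ := ih
    obtain ⟨t, hpre, hdisj⟩ := hC (s ++ w')
    set ex := t.drop (s ++ w').length with hex
    have hteq : (s ++ w') ++ ex = t := List.prefix_iff_eq_append.mp hpre
    refine ⟨w' ++ ex, ?_⟩
    intro s'' hs''
    rcases Finset.mem_insert.mp hs'' with h | h
    · rw [h, ← List.append_assoc, hteq]
      exact hdisj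
    · have : Cyl (s'' ++ (w' ++ ex)) ⊆ Cyl (s'' ++ w') := by
        apply Cyl_mono
        rw [← List.append_assoc]
        exact List.prefix_append _ _
      rw [Set.eq_empty_iff_forall_notMem]
      intro x ⟨hx1, hx2⟩
      exact Set.eq_empty_iff_forall_notMem.mp (hw' s'' h) x ⟨this hx1, hx2⟩

/-- avoidance of a whole level: a word `w` such that from any node of length `a`,
following `w` escapes `C`. -/
lemma exists_block {C : Set (ℕ → Bool)} (hC : AvoidP C) (a : ℕ) :
    ∃ w : List Bool, w ≠ [] ∧
      ∀ x ∈ C, ¬ (∀ i, a ≤ i → i < a + w.length → x i = w.getD (i - a) false) := by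
  obtain ⟨w₀, hw₀⟩ := exists_avoid_finset hC ((List.finite_length_eq Bool a).toFinset)
  refine ⟨w₀ ++ [false], by simp, ?_⟩
  intro x hx hmatch
  have hs : res x a ∈ (List.finite_length_eq Bool a).toFinset := by
    simp [Set.Finite.mem_toFinset]
  have hxc : x ∈ Cyl (res x a ++ (w₀ ++ [false])) := by
    rw [mem_Cyl]
    intro i hi
    simp only [List.length_append, length_res, List.length_cons, List.length_nil] at hi
    rcases lt_or_ge i a with h | h
    · rw [List.getElem_append_left (by simpa using h)]
      exact (res_getElem x h).symm
    · rw [List.getElem_append_right (by simpa using h)]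
      have hlt : i - a < (w₀ ++ [false]).length := by simp at hi ⊢; omega
      rw [← List.getD_eq_getElem (w₀ ++ [false]) false (by simpa using hlt)]
      have := hmatch i h (by simp at hi ⊢; omega)
      simpa using this
  refine Set.eq_empty_iff_forall_notMem.mp (hw₀ (res x a) hs) x
    ⟨Cyl_mono (by rw [← List.append_assoc]; exact List.prefix_append _ _) hxc, hx⟩

open Classical in
/-- a canonical escape block, defined for arbitrary sets -/
def blockOf (C : Set (ℕ → Bool)) (a : ℕ) : List Bool :=
  if h : AvoidP C then (exists_block h a).choose else [false]

lemma blockOf_ne_nil (C : Set (ℕ → Bool)) (a : ℕ) : blockOf C a ≠ [] := by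
  unfold blockOf
  split
  · exact (exists_block ‹_› a).choose_spec.1
  · simp

lemma blockOf_spec {C : Set (ℕ → Bool)} (h : AvoidP C) (a : ℕ) :
    ∀ x ∈ C, ¬ (∀ i, a ≤ i → i < a + (blockOf C a).length →
      x i = (blockOf C a).getD (i - a) false) := by
  unfold blockOf
  split
  · exact (exists_block ‹_› a).choose_spec.2
  · exact absurd h ‹_›

/-- cumulative concatenation of escape blocks along a sequence of sets -/
def ycum (Cs : ℕ → Set (ℕ → Bool)) : ℕ → List Bool
  | 0 => []
  | n + 1 => ycum Cs n ++ blockOf (Cs n) (ycum Cs n).length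

def eOf (Cs : ℕ → Set (ℕ → Bool)) (n : ℕ) : ℕ := (ycum Cs n).length

def yOf (Cs : ℕ → Set (ℕ → Bool)) (i : ℕ) : Bool := (ycum Cs (i + 1)).getD i false

lemma eOf_strictMono (Cs : ℕ → Set (ℕ → Bool)) : StrictMono (eOf Cs) := by
  apply strictMono_nat_of_lt_succ
  intro n
  have : (blockOf (Cs n) (ycum Cs n).length).length ≠ 0 := by
    simpa using blockOf_ne_nil (Cs n) (ycum Cs n).length
  simp only [eOf, ycum, List.length_append]
  omega

lemma ycum_prefix (Cs : ℕ → Set (ℕ → Bool)) {n m : ℕ} (h : n ≤ m) :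
    ycum Cs n <+: ycum Cs m := by
  induction m with
  | zero => rw [Nat.le_zero.mp h]
  | succ m ih =>
    rcases Nat.lt_or_ge n (m+1) with h2 | h2
    · exact (ih (by omega)).trans (by rw [ycum]; exact List.prefix_append _ _)
    · rw [Nat.le_antisymm h h2]

lemma yOf_eq (Cs : ℕ → Set (ℕ → Bool)) {i m : ℕ} (h : i < eOf Cs m) :
    yOf Cs i = (ycum Cs m).getD i false := by
  have h1 : i < eOf Cs (i + 1) := lt_of_lt_of_le (Nat.lt_succ_self i)
    ((eOf_strictMono Cs).le_apply)
  rcases le_total (i+1) m with h2 | h2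
  · have := ycum_prefix Cs h2
    rw [yOf, List.getD_eq_getElem _ _ (by exact h1), List.getD_eq_getElem _ _ (by exact h)]
    exact this.getElem h1
  · have := ycum_prefix Cs h2
    rw [yOf, List.getD_eq_getElem _ _ (by exact h1), List.getD_eq_getElem _ _ (by exact h)]
    exact (this.getElem h).symm

/-- the central property: a point of `Cs m` never matches the pattern on block `n ≥ m`. -/
lemma yOf_avoid {Cs : ℕ → Set (ℕ → Bool)} (hav : ∀ n, AvoidP (Cs n))
    (hmono : ∀ {m n}, m ≤ n → Cs m ⊆ Cs n) {m n : ℕ} (hmn : m ≤ n)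
    {x : ℕ → Bool} (hx : x ∈ Cs m) :
    ¬ (∀ i, eOf Cs n ≤ i → i < eOf Cs (n+1) → x i = yOf Cs i) := by
  intro hmatch
  apply blockOf_spec (hav n) (ycum Cs n).length x (hmono hmn hx)
  intro i hi1 hi2
  have hlen : eOf Cs (n+1) = eOf Cs n + (blockOf (Cs n) (ycum Cs n).length).length := by
    simp [eOf, ycum]
  have hi2' : i < eOf Cs (n+1) := by rw [hlen]; exact hi2
  rw [hmatch i hi1 hi2', yOf_eq Cs hi2']
  rw [show ycum Cs (n+1) = ycum Cs n ++ blockOf (Cs n) (ycum Cs n).length from rfl,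
    List.getD_append_right _ _ _ _ hi1]

/-- points avoiding the pattern `y` on every `e`-block beyond `N` -/
def Dmg (e : ℕ → ℕ) (y : ℕ → Bool) (N : ℕ) : Set (ℕ → Bool) :=
  {x | ∀ n, N ≤ n → ¬ ∀ i, e n ≤ i → i < e (n+1) → x i = y i}

def Mg (e : ℕ → ℕ) (y : ℕ → Bool) : Set (ℕ → Bool) := ⋃ N, Dmg e y N

lemma isClosed_Dmg (e : ℕ → ℕ) (y : ℕ → Bool) (N : ℕ) : IsClosed (Dmg e y N) := by
  have : Dmg e y N = ⋂ n, ⋂ (_ : N ≤ n), {x : ℕ → Bool | ∀ i, e n ≤ i → i < e (n+1) → x i = y i}ᶜ := by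
    ext x; simp [Dmg]
  rw [this]
  refine isClosed_iInter fun n => isClosed_iInter fun _ => IsOpen.isClosed_compl ?_
  have : {x : ℕ → Bool | ∀ i, e n ≤ i → i < e (n+1) → x i = y i}
      = ⋂ i ∈ Finset.Ico (e n) (e (n+1)), (fun x : ℕ → Bool => x i) ⁻¹' {y i} := by
    ext x
    simp [Finset.mem_Ico, and_imp]
  rw [this]
  exact isOpen_biInter_finset fun i _ => (continuous_apply i).isOpen_preimage _ (isOpen_discrete _)

lemma avoidP_Dmg {e : ℕ → ℕ} (he : StrictMono e) (y : ℕ → Bool) (N : ℕ) :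
    AvoidP (Dmg e y N) := by
  intro s
  set n := max N s.length with hn
  have hen : s.length ≤ e n := le_trans (le_max_right _ _) he.le_apply
  have hlt : e n < e (n+1) := he (Nat.lt_succ_self n)
  set t := List.ofFn (fun i : Fin (e (n+1)) => if h : (i : ℕ) < s.length then s[(i : ℕ)] else y i)
    with ht
  have htlen : t.length = e (n+1) := by simp [ht]
  have htget : ∀ i (h : i < e (n+1)),
      t[i]'(by omega) = if h : i < s.length then s[i] else y i := by
    intro i h
    simp [ht]
  refine ⟨t, ?_, ?_⟩
  · rw [List.prefix_iff_eq_take]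
    apply List.ext_getElem (by simp [htlen]; omega)
    intro i h1 h2
    rw [List.getElem_take]
    rw [htget i (by omega)]
    simp [h1]
  · rw [Set.eq_empty_iff_forall_notMem]
    intro x ⟨hx1, hx2⟩
    apply hx2 n (le_max_left _ _)
    intro i hi1 hi2
    rw [mem_Cyl] at hx1
    have := hx1 i (by omega)
    rw [htget i (by omega)] at this
    rw [this]
    simp [Nat.not_lt.mpr (le_trans hen hi1)]

lemma isMeagre_Mg {e : ℕ → ℕ} (he : StrictMono e) (y : ℕ → Bool) : IsMeagre (Mg e y) := by
  rw [isMeagre_iff_countable_union_isNowhereDense]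
  refine ⟨Set.range (Dmg e y), ?_, Set.countable_range _, ?_⟩
  · rintro t ⟨N, rfl⟩
    exact isNowhereDense_of_avoidP (isClosed_Dmg e y N) (avoidP_Dmg he y N)
  · rw [Set.sUnion_range]
    exact Set.Subset.rfl

/-- every meager set is contained in some `Mg e y` -/
lemma meager_subset_Mg {A : Set (ℕ → Bool)} (hA : IsMeagre A) :
    ∃ (e : ℕ → ℕ) (y : ℕ → Bool), StrictMono e ∧ A ⊆ Mg e y := by
  rw [isMeagre_iff_countable_union_isNowhereDense] at hA
  obtain ⟨S, hnwd, hcnt, hsub⟩ := hA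
  obtain ⟨f, hf⟩ := (hcnt.insert ∅).exists_eq_range (Set.insert_nonempty _ _)
  have hfnwd : ∀ j, IsNowhereDense (f j) := by
    intro j
    have : f j ∈ insert ∅ S := by rw [hf]; exact ⟨j, rfl⟩
    rcases this with h | h
    · rw [h]; simp [IsNowhereDense]
    · exact hnwd _ h
  set Cs : ℕ → Set (ℕ → Bool) := fun n => Nat.rec (closure (f 0))
    (fun m C => C ∪ closure (f (m+1))) n with hCs
  have hCs0 : Cs 0 = closure (f 0) := rfl
  have hCsS : ∀ m, Cs (m+1) = Cs m ∪ closure (f (m+1)) := fun m => rfl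
  have hkey : ∀ n, IsClosed (Cs n) ∧ AvoidP (Cs n) := by
    intro n
    induction n with
    | zero => exact ⟨isClosed_closure,
        avoidP_of_isNowhereDense isClosed_closure ((hfnwd 0).closure)⟩
    | succ m ih =>
      rw [hCsS]
      exact ⟨ih.1.union isClosed_closure,
        avoidP_union ih.2 (avoidP_of_isNowhereDense isClosed_closure ((hfnwd (m+1)).closure))⟩
  have hmono : ∀ {m n : ℕ}, m ≤ n → Cs m ⊆ Cs n := by
    intro m n h
    induction n with
    | zero => rw [Nat.le_zero.mp h]
    | succ k ih =>
      rcases Nat.lt_or_ge m (k+1) with h2 | h2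
      · rw [hCsS]; exact (ih (by omega)).trans Set.subset_union_left
      · rw [Nat.le_antisymm h h2]
  have hfsub : ∀ m, f m ⊆ Cs m := by
    intro m
    cases m with
    | zero => exact subset_closure
    | succ k => rw [hCsS]; exact subset_closure.trans Set.subset_union_right
  refine ⟨eOf Cs, yOf Cs, eOf_strictMono Cs, ?_⟩
  intro x hx
  obtain ⟨A', hA', hxA'⟩ := hsub hx
  have : A' ∈ Set.range f := by rw [← hf]; exact Set.mem_insert_of_mem _ hA'
  obtain ⟨m, rfl⟩ := this
  refine Set.mem_iUnion.mpr ⟨m, ?_⟩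
  intro n hn
  exact yOf_avoid (fun k => (hkey k).2) (fun h => hmono h) hn (hfsub m hxA')

/-- every closed set with the avoidance property is contained in some `Dmg e y 0` -/
lemma closed_subset_Dmg {C : Set (ℕ → Bool)} (hav : AvoidP C) :
    ∃ (e : ℕ → ℕ) (y : ℕ → Bool), StrictMono e ∧ C ⊆ Dmg e y 0 := by
  set Cs : ℕ → Set (ℕ → Bool) := fun _ => C with hCs
  refine ⟨eOf Cs, yOf Cs, eOf_strictMono Cs, ?_⟩
  intro x hx n _
  exact yOf_avoid (fun _ => hav) (fun _ => Set.Subset.rfl) (Nat.zero_le n) hx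

/-- the key combinatorial lemma: containment of the associated meager sets yields
block-engulfing with matching patterns. -/
lemma lemmaB {e e' : ℕ → ℕ} {y y' : ℕ → Bool} (he : StrictMono e) (he' : StrictMono e')
    (hsub : Mg e y ⊆ Mg e' y') :
    ∃ N, ∀ n, N ≤ n → ∃ m, e' n ≤ e m ∧ e (m+1) ≤ e' (n+1) ∧
      ∀ i, e m ≤ i → i < e (m+1) → y i = y' i := by
  by_contra hbad
  push_neg at hbad
  -- extract a sparse sequence of "bad" blocks of e'
  have hbad' : ∀ N, ∃ n, N ≤ n ∧ ∀ m, e' n ≤ e m → e (m+1) ≤ e' (n+1) →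
      ∃ i, e m ≤ i ∧ i < e (m+1) ∧ y i ≠ y' i := by
    intro N
    obtain ⟨n, hn1, hn2⟩ := hbad N
    exact ⟨n, hn1, fun m h1 h2 => by
      obtain ⟨i, hi1, hi2, hi3⟩ := hn2 m h1 h2
      exact ⟨i, hi1, hi2, hi3⟩⟩
  set ns : ℕ → ℕ := fun k => Nat.rec ((hbad' 0).choose)
    (fun _ prev => (hbad' (prev + 2)).choose) k with hns
  have hns0 : ns 0 = (hbad' 0).choose := rfl
  have hnsS : ∀ k, ns (k+1) = (hbad' (ns k + 2)).choose := fun k => rfl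
  have hgap : ∀ k, ns k + 2 ≤ ns (k+1) := by
    intro k
    rw [hnsS]
    exact (hbad' (ns k + 2)).choose_spec.1
  have hbad_ns : ∀ k, ∀ m, e' (ns k) ≤ e m → e (m+1) ≤ e' (ns k + 1) →
      ∃ i, e m ≤ i ∧ i < e (m+1) ∧ y i ≠ y' i := by
    intro k
    cases k with
    | zero => exact (hbad' 0).choose_spec.2
    | succ j => rw [hnsS]; exact (hbad' (ns j + 2)).choose_spec.2
  have hns_mono : StrictMono ns := strictMono_nat_of_lt_succ fun k => by have := hgap k; omega
  -- the diagonal point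
  classical
  set x : ℕ → Bool := fun i =>
    if h : ∃ k, e' (ns k) ≤ i ∧ i < e' (ns k + 1) then y' i else !(y i) with hx
  have hxval1 : ∀ i, (∃ k, e' (ns k) ≤ i ∧ i < e' (ns k + 1)) → x i = y' i := by
    intro i h; simp [hx, h]
  have hxval2 : ∀ i, (¬ ∃ k, e' (ns k) ≤ i ∧ i < e' (ns k + 1)) → x i = !(y i) := by
    intro i h; simp [hx, h]
  -- x is in Mg e y
  have hxin : x ∈ Mg e y := by
    refine Set.mem_iUnion.mpr ⟨0, fun m _ hmatch => ?_⟩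
    by_cases hcov : ∀ i, e m ≤ i → i < e (m+1) → ∃ k, e' (ns k) ≤ i ∧ i < e' (ns k + 1)
    · -- block m is covered by the chosen blocks; show it sits inside a single one
      have hem : e m < e (m+1) := he (Nat.lt_succ_self m)
      obtain ⟨k₀, hk₀1, hk₀2⟩ := hcov (e m) (le_refl _) hem
      have hincl : e (m+1) ≤ e' (ns k₀ + 1) := by
        by_contra hnot
        push_neg at hnot
        obtain ⟨k₁, hk₁1, hk₁2⟩ := hcov (e' (ns k₀ + 1)) (by omega) hnot
        have h1 : ns k₁ ≤ ns k₀ + 1 := by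
          by_contra h
          push_neg at h
          have := he' h
          omega
        have h2 : ns k₀ + 1 < ns k₁ + 1 := by
          have := he'.lt_iff_lt.mp hk₁2
          omega
        have h3 : ns k₁ = ns k₀ + 1 := by omega
        rcases le_or_gt k₁ k₀ with h4 | h4
        · have := hns_mono.monotone h4; omega
        · have h5 : ns (k₀ + 1) ≤ ns k₁ := hns_mono.monotone h4
          have := hgap k₀; omega
      obtain ⟨i, hi1, hi2, hi3⟩ := hbad_ns k₀ m hk₀1 hincl
      have : x i = y' i := hxval1 i ⟨k₀, by omega, by omega⟩
      rw [hmatch i hi1 hi2] at this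
      exact hi3 this
    · push_neg at hcov
      obtain ⟨i, hi1, hi2, hi3⟩ := hcov
      have hne : ¬ ∃ k, e' (ns k) ≤ i ∧ i < e' (ns k + 1) := by
        rintro ⟨k, hk1, hk2⟩
        exact absurd (hi3 k hk1) (by omega)
      have := hxval2 i hne
      rw [hmatch i hi1 hi2] at this
      simp at this
  -- but x is not in Mg e' y'
  have hxout : x ∉ Mg e' y' := by
    intro hmem
    obtain ⟨N, hN⟩ := Set.mem_iUnion.mp hmem
    have hnsN : N ≤ ns N := le_trans (le_refl _) (hns_mono.le_apply)
    refine hN (ns N) hnsN ?_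
    intro i hi1 hi2
    exact hxval1 i ⟨N, hi1, hi2⟩
  exact hxout (hsub hxin)

/-- transfer: engulfing yields inclusion of the closed kernels -/
lemma Dmg_subset_of_lemmaB {e e' : ℕ → ℕ} {y y' : ℕ → Bool} {N : ℕ}
    (h : ∀ n, N ≤ n → ∃ m, e' n ≤ e m ∧ e (m+1) ≤ e' (n+1) ∧
      ∀ i, e m ≤ i → i < e (m+1) → y i = y' i) :
    Dmg e y 0 ⊆ Dmg e' y' N := by
  intro x hx n hn hmatch
  obtain ⟨m, h1, h2, h3⟩ := h n hn
  refine hx m (Nat.zero_le m) ?_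
  intro i hi1 hi2
  rw [h3 i hi1 hi2]
  exact hmatch i (by omega) (by omega)

/-- `rep n` = n trues -/
def rep (n : ℕ) : List Bool := List.replicate n true

@[simp] lemma length_rep (n : ℕ) : (rep n).length = n := by simp [rep]

lemma repFalse_len (a : ℕ) (v : List Bool) : (rep a ++ [false] ++ v).length = a + 1 + v.length := by
  simp [rep]; omega

lemma repFalse_get_lt {a : ℕ} {v : List Bool} {i : ℕ} (h : i < a) :
    (rep a ++ [false] ++ v)[i]'(by rw [repFalse_len]; omega) = true := by
  rw [List.getElem_append_left (by simp; omega), List.getElem_append_left (by simp; omega)]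
  simp [rep]

lemma repFalse_get_eq (a : ℕ) (v : List Bool) :
    (rep a ++ [false] ++ v)[a]'(by rw [repFalse_len]; omega) = false := by
  rw [List.getElem_append_left (by simp), List.getElem_append_right (by simp)]
  simp

lemma first_false_eq {a b : ℕ} {v z u w : List Bool} (hu : u = rep a ++ [false] ++ v)
    (hw : w = rep b ++ [false] ++ z) (h : u <+: w) : a = b := by
  subst hu; subst hw
  rcases lt_trichotomy a b with hab | hab | hab
  · have h1 := h.getElem (show a < (rep a ++ [false] ++ v).length by rw [repFalse_len]; omega)
    rw [repFalse_get_eq, repFalse_get_lt hab] at h1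
    simp at h1
  · exact hab
  · have h1 := h.getElem (show b < (rep a ++ [false] ++ v).length by rw [repFalse_len]; omega)
    rw [repFalse_get_lt hab, repFalse_get_eq] at h1
    simp at h1

lemma repFalse_inj {a b : ℕ} {v z : List Bool}
    (h : rep a ++ [false] ++ v = rep b ++ [false] ++ z) : a = b ∧ v = z := by
  have hab : a = b := first_false_eq rfl rfl (by rw [h])
  subst hab
  exact ⟨rfl, List.append_cancel_left h⟩

lemma not_rep_of_false {u : List Bool} {a : ℕ} {v : List Bool}
    (hu : u = rep a ++ [false] ++ v) (m : ℕ) : u ≠ rep m := by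
  intro h
  have hq : rep a ++ [false] ++ v = rep m := hu.symm.trans h
  have hla : a < (rep a ++ [false] ++ v).length := by rw [repFalse_len]; omega
  have h1 := List.getElem_of_eq hq hla
  rw [repFalse_get_eq] at h1
  rw [show (rep m)[a]'(hq ▸ hla) = true from by simp [rep]] at h1
  simp at h1

lemma prefix_rep {u : List Bool} {n : ℕ} (h : u <+: rep n) : u = rep u.length := by
  rw [rep, List.eq_replicate_iff]
  exact ⟨rfl, fun b hb => List.eq_of_mem_replicate (h.subset hb)⟩

lemma prefix_append_cases {u a b : List Bool} (h : u <+: a ++ b) (hl : a.length ≤ u.length) :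
    ∃ b', u = a ++ b' ∧ b' <+: b := by
  obtain ⟨w, hw⟩ := h
  have hau : a <+: u := by
    rcases List.prefix_or_prefix_of_prefix (List.prefix_append a b) ⟨w, hw⟩ with h2 | h2
    · exact h2
    · have hlen : u.length = a.length := Nat.le_antisymm h2.length_le hl
      rw [h2.eq_of_length hlen]
  obtain ⟨d, hd⟩ := hau
  refine ⟨d, hd.symm, ⟨w, ?_⟩⟩
  have : a ++ (d ++ w) = a ++ b := by rw [← List.append_assoc, hd, hw]
  exact List.append_cancel_left this

lemma exists_first_false (s : List Bool) (h : s ≠ rep s.length) :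
    ∃ j r, s = rep j ++ [false] ++ r := by
  induction s with
  | nil => exact absurd rfl h
  | cons b s' ih =>
    cases b with
    | false => exact ⟨0, s', by simp [rep]⟩
    | true =>
      have h' : s' ≠ rep s'.length := by
        intro h2
        apply h
        rw [show (true :: s').length = s'.length + 1 from by simp, rep, List.replicate_succ,
          ← rep, ← h2]
      obtain ⟨j, r, hjr⟩ := ih h'
      exact ⟨j + 1, r, by rw [rep, List.replicate_succ, ← rep, hjr]; simp⟩

/-- grafting a sequence of trees below the nodes `1^n 0` -/
def graft (Ts : ℕ → Set (List Bool)) : Set (List Bool) :=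
  {u | (∃ n, u = rep n) ∨ ∃ n τ, τ ∈ Ts n ∧ u = rep n ++ [false] ++ τ}

def loc (U : Set (List Bool)) (n : ℕ) : Set (List Bool) := {τ | rep n ++ [false] ++ τ ∈ U}

lemma isTree_graft {Ts : ℕ → Set (List Bool)} (h : ∀ n, IsTree (Ts n)) :
    IsTree (graft Ts) := by
  rintro u (⟨n, rfl⟩ | ⟨n, τ, hτ, rfl⟩) u' hu'
  · exact Or.inl ⟨u'.length, prefix_rep hu'⟩
  · rcases lt_or_ge u'.length (n+1) with hl | hl
    · left
      have : u' <+: rep n := by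
        apply prefix_of_prefix_append (b := [false] ++ τ)
        · rwa [← List.append_assoc]
        · simp; omega
      exact ⟨u'.length, prefix_rep this⟩
    · right
      obtain ⟨b', hb'eq, hb'⟩ := prefix_append_cases (a := rep n ++ [false]) (b := τ)
        hu' (by simp; omega)
      exact ⟨n, b', h n τ hτ b' hb', hb'eq⟩

lemma nwdTree_graft {Ts : ℕ → Set (List Bool)} (h : ∀ n, NwdTree (Ts n)) :
    NwdTree (graft Ts) := by
  intro s
  by_cases hs : s = rep s.length
  · obtain ⟨t, hpre, ht⟩ := h s.length []
    refine ⟨rep s.length ++ [false] ++ t, ?_, ?_⟩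
    · conv => lhs; rw [hs]
      rw [List.append_assoc]
      exact List.prefix_append _ _
    · rintro (⟨m, hm⟩ | ⟨m, τ, hτ, heq⟩)
      · exact not_rep_of_false rfl m hm
      · obtain ⟨h1, h2⟩ := repFalse_inj heq.symm
        rw [h1, h2] at hτ
        exact ht hτ
  · obtain ⟨j, r, rfl⟩ := exists_first_false s hs
    obtain ⟨t, hpre, ht⟩ := h j r
    obtain ⟨w, rfl⟩ := hpre
    refine ⟨rep j ++ [false] ++ (r ++ w), by simp only [← List.append_assoc]; exact List.prefix_append _ _, ?_⟩
    rintro (⟨m, hm⟩ | ⟨m, τ, hτ, heq⟩)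
    · exact not_rep_of_false rfl m hm
    · obtain ⟨h1, h2⟩ := repFalse_inj heq.symm
      rw [h1, h2] at hτ
      exact ht hτ

lemma nwdTree_loc {U : Set (List Bool)} (hU : NwdTree U) (n : ℕ) : NwdTree (loc U n) := by
  intro σ
  obtain ⟨t, hpre, ht⟩ := hU (rep n ++ [false] ++ σ)
  obtain ⟨w, rfl⟩ := hpre
  refine ⟨σ ++ w, List.prefix_append _ _, ?_⟩
  intro hmem
  rw [loc, Set.mem_setOf_eq] at hmem
  simp only [← List.append_assoc] at hmem ht
  exact ht hmem

/-- a meager set is covered by an increasing sequence of closed sets with the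
avoidance property -/
lemma meager_cover {A : Set (ℕ → Bool)} (hA : IsMeagre A) :
    ∃ Cs : ℕ → Set (ℕ → Bool), (∀ n, IsClosed (Cs n) ∧ AvoidP (Cs n)) ∧ A ⊆ ⋃ n, Cs n := by
  rw [isMeagre_iff_countable_union_isNowhereDense] at hA
  obtain ⟨S, hnwd, hcnt, hsub⟩ := hA
  obtain ⟨f, hf⟩ := (hcnt.insert ∅).exists_eq_range (Set.insert_nonempty _ _)
  have hfnwd : ∀ j, IsNowhereDense (f j) := by
    intro j
    have : f j ∈ insert ∅ S := by rw [hf]; exact ⟨j, rfl⟩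
    rcases this with h | h
    · rw [h]; simp [IsNowhereDense]
    · exact hnwd _ h
  refine ⟨fun n => closure (f n), fun n => ⟨isClosed_closure,
    avoidP_of_isNowhereDense isClosed_closure ((hfnwd n).closure)⟩, ?_⟩
  intro x hx
  obtain ⟨A', hA', hxA'⟩ := hsub hx
  have : A' ∈ Set.range f := by rw [← hf]; exact Set.mem_insert_of_mem _ hA'
  obtain ⟨m, rfl⟩ := this
  exact Set.mem_iUnion.mpr ⟨m, subset_closure hxA'⟩

/-- Direction A: a cofinal family of nwd trees gives a cofinal family of meager sets. -/
def meagerOf (U : Set (List Bool)) : Set (ℕ → Bool) := ⋃ n, Br (loc U n)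

lemma isMeagre_meagerOf {U : Set (List Bool)} (hU : NwdTree U) : IsMeagre (meagerOf U) := by
  rw [isMeagre_iff_countable_union_isNowhereDense]
  refine ⟨Set.range (fun n => Br (loc U n)), ?_, Set.countable_range _, ?_⟩
  · rintro t ⟨n, rfl⟩
    exact isNowhereDense_Br (nwdTree_loc hU n)
  · rw [Set.sUnion_range]
    exact Set.Subset.rfl

lemma dirA_cover {𝒯 : Set (Set (List Bool))}
    (h2 : ∀ T : Set (List Bool), IsTree T → NwdTree T → ∃ U ∈ 𝒯, T ⊆ U)
    {A : Set (ℕ → Bool)} (hA : IsMeagre A) : ∃ U ∈ 𝒯, A ⊆ meagerOf U := by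
  obtain ⟨Cs, hCs, hsub⟩ := meager_cover hA
  set T : Set (List Bool) := graft (fun n => tch (Cs n)) with hT
  have hTtree : IsTree T := isTree_graft (fun n => isTree_tch (Cs n))
  have hTnwd : NwdTree T := nwdTree_graft (fun n => nwdTree_tch (hCs n).2)
  obtain ⟨U, hU𝒯, hTU⟩ := h2 T hTtree hTnwd
  refine ⟨U, hU𝒯, ?_⟩
  intro x hx
  obtain ⟨n, hn⟩ := Set.mem_iUnion.mp (hsub hx)
  refine Set.mem_iUnion.mpr ⟨n, ?_⟩
  intro k
  apply hTU
  exact Or.inr ⟨n, res x k, ⟨x, res_mem_Cyl_self x k, hn⟩, rfl⟩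

/-- Direction B: from a cofinal family of meager sets, a cofinal family of
perfect nwd trees. -/
lemma dirB {B : Set (Set (ℕ → Bool))} (h1 : ∀ Y ∈ B, IsMeagre Y)
    (h2 : ∀ A : Set (ℕ → Bool), IsMeagre A → ∃ Y ∈ B, A ⊆ Y) :
    ∃ g : ↥B × ℕ → Set (List Bool),
      (∀ p, PerfectTree (g p) ∧ NwdTree (g p)) ∧
      (∀ T : Set (List Bool), IsTree T → NwdTree T → ∃ p, T ⊆ g p) := by
  have hch : ∀ Y : ↥B, ∃ (e : ℕ → ℕ) (y : ℕ → Bool), StrictMono e ∧ (Y : Set (ℕ → Bool)) ⊆ Mg e y :=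
    fun Y => meager_subset_Mg (h1 Y Y.2)
  choose eCh yCh heCh hsubCh using hch
  refine ⟨fun p => hull (tch (Dmg (eCh p.1) (yCh p.1) p.2)), fun p => ?_, ?_⟩
  · constructor
    · exact perfectTree_hull _
    · exact nwdTree_hull (isTree_tch _) (nwdTree_tch (avoidP_Dmg (heCh p.1) _ _))
  · intro T hTtree hTnwd
    -- the closed nwd set of branches of the zero-padding of T
    have hav : AvoidP (Br (pad0 T)) := avoidP_Br (nwdTree_pad0 hTtree hTnwd)
    obtain ⟨e, y, he, hCsub⟩ := closed_subset_Dmg hav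
    have hMg : IsMeagre (Mg e y) := isMeagre_Mg he y
    obtain ⟨Y, hY, hYsub⟩ := h2 (Mg e y) hMg
    have hMM : Mg e y ⊆ Mg (eCh ⟨Y, hY⟩) (yCh ⟨Y, hY⟩) := hYsub.trans (hsubCh ⟨Y, hY⟩)
    obtain ⟨N, hN⟩ := lemmaB he (heCh ⟨Y, hY⟩) hMM
    refine ⟨(⟨Y, hY⟩, N), ?_⟩
    have hDD : Dmg e y 0 ⊆ Dmg (eCh ⟨Y, hY⟩) (yCh ⟨Y, hY⟩) N := Dmg_subset_of_lemmaB hN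
    have hBrD : Br (pad0 T) ⊆ Dmg (eCh ⟨Y, hY⟩) (yCh ⟨Y, hY⟩) N := hCsub.trans hDD
    have : T ⊆ tch (Dmg (eCh ⟨Y, hY⟩) (yCh ⟨Y, hY⟩) N) :=
      (subset_pad0 T).trans (pad0_subset_tch hBrD)
    exact this.trans (subset_hull _)

lemma not_isMeagre_univ : ¬ IsMeagre (Set.univ : Set (ℕ → Bool)) := by
  intro h
  rw [IsMeagre, Set.compl_univ] at h
  exact Set.not_nonempty_empty (dense_of_mem_residual h).nonempty

lemma exists_not_mem_of_isMeagre {Y : Set (ℕ → Bool)} (h : IsMeagre Y) : ∃ x, x ∉ Y := by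
  by_contra hb
  push_neg at hb
  exact not_isMeagre_univ (by rwa [Set.eq_univ_of_forall hb] at h)

lemma isNowhereDense_singleton (x : ℕ → Bool) : IsNowhereDense ({x} : Set (ℕ → Bool)) := by
  rw [isClosed_singleton.isNowhereDense_iff, Set.eq_empty_iff_forall_notMem]
  intro z hz
  have hzx : z ∈ ({x} : Set (ℕ → Bool)) := interior_subset hz
  rw [Set.mem_singleton_iff] at hzx
  subst hzx
  obtain ⟨k, hk⟩ := exists_res_subset_of_isOpen isOpen_interior hz
  classical
  set y : ℕ → Bool := fun i => if i = k then !(z i) else z i with hy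
  have hyc : y ∈ Cyl (res z k) := by
    rw [mem_Cyl]
    intro i hi
    rw [res_getElem z (by simpa using hi)]
    simp only [hy]
    rw [if_neg (by simp at hi; omega)]
  have hyz : y ∈ ({z} : Set (ℕ → Bool)) := interior_subset (hk hyc)
  rw [Set.mem_singleton_iff] at hyz
  have h2 := congrFun hyz k
  simp [hy] at h2

lemma uncountable_meager_base {B : Set (Set (ℕ → Bool))} (h1 : ∀ Y ∈ B, IsMeagre Y)
    (h2 : ∀ A : Set (ℕ → Bool), IsMeagre A → ∃ Y ∈ B, A ⊆ Y) : ¬ B.Countable := by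
  intro hcnt
  have hne : B.Nonempty := by
    obtain ⟨Y, hY, _⟩ := h2 ∅ IsMeagre.empty
    exact ⟨Y, hY⟩
  obtain ⟨f, hfB⟩ := hcnt.exists_eq_range hne
  have hx : ∀ n, ∃ x, x ∉ f n := fun n =>
    exists_not_mem_of_isMeagre (h1 _ (by rw [hfB]; exact ⟨n, rfl⟩))
  choose xs hxs using hx
  have hE : IsMeagre (Set.range xs) := by
    rw [isMeagre_iff_countable_union_isNowhereDense]
    refine ⟨Set.range (fun n => ({xs n} : Set (ℕ → Bool))), ?_, Set.countable_range _, ?_⟩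
    · rintro t ⟨n, rfl⟩
      exact isNowhereDense_singleton _
    · rintro x ⟨n, rfl⟩
      exact ⟨{xs n}, ⟨n, rfl⟩, rfl⟩
  obtain ⟨Y, hY, hEY⟩ := h2 _ hE
  rw [hfB] at hY
  obtain ⟨n, rfl⟩ := hY
  exact hxs n (hEY ⟨n, rfl⟩)

lemma uncountable_tree_base {𝒯 : Set (Set (List Bool))}
    (h1 : ∀ U ∈ 𝒯, PerfectTree U ∧ NwdTree U)
    (h2 : ∀ T : Set (List Bool), IsTree T → NwdTree T → ∃ U ∈ 𝒯, T ⊆ U) :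
    ¬ 𝒯.Countable := by
  intro hcnt
  have hempty_tree : IsTree (∅ : Set (List Bool)) := fun s hs => absurd hs (Set.notMem_empty s)
  have hempty_nwd : NwdTree (∅ : Set (List Bool)) :=
    fun s => ⟨s, List.prefix_refl s, Set.notMem_empty s⟩
  have hne : 𝒯.Nonempty := by
    obtain ⟨U, hU, _⟩ := h2 ∅ hempty_tree hempty_nwd
    exact ⟨U, hU⟩
  obtain ⟨f, hf𝒯⟩ := hcnt.exists_eq_range hne
  have hfmem : ∀ n, f n ∈ 𝒯 := fun n => by rw [hf𝒯]; exact ⟨n, rfl⟩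
  have hdiag : ∀ n, ∃ r : List Bool, rep n ++ [false] ++ r ∉ f n := by
    intro n
    obtain ⟨t, hpre, ht⟩ := (h1 _ (hfmem n)).2 (rep n ++ [false])
    have heq := List.prefix_iff_eq_append.mp hpre
    exact ⟨t.drop (rep n ++ [false]).length, by rwa [heq]⟩
  choose rs hrs using hdiag
  set tf : ℕ → List Bool := fun n => rep n ++ [false] ++ rs n with htf
  set T : Set (List Bool) := {p | ∃ n, p <+: tf n} with hTdef
  have hTtree : IsTree T := by
    rintro p ⟨n, hn⟩ q hq
    exact ⟨n, hq.trans hn⟩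
  have hTnwd : NwdTree T := by
    intro s
    by_cases hs : s = rep s.length
    · set u := rep s.length ++ [false] ++ List.replicate (tf s.length).length false with hu
      refine ⟨u, ?_, ?_⟩
      · conv => lhs; rw [hs]
        rw [hu, List.append_assoc]
        exact List.prefix_append _ _
      · rintro ⟨n, hn⟩
        have hne' : s.length = n := first_false_eq hu rfl hn
        have hlen := hn.length_le
        rw [hu, repFalse_len, ← hne'] at hlen
        simp only [List.length_replicate] at hlen
        omega
    · obtain ⟨j, r, rfl⟩ := exists_first_false s hs
      set u := rep j ++ [false] ++ (r ++ List.replicate (tf j).length false) with hu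
      refine ⟨u, ?_, ?_⟩
      · rw [hu]
        simp only [← List.append_assoc]
        exact List.prefix_append _ _
      · rintro ⟨n, hn⟩
        have hne' : j = n := first_false_eq hu rfl hn
        have hlen := hn.length_le
        rw [hu, repFalse_len, ← hne'] at hlen
        simp only [List.length_append, List.length_replicate] at hlen
        omega
  obtain ⟨U, hU, hTU⟩ := h2 T hTtree hTnwd
  rw [hf𝒯] at hU
  obtain ⟨n, rfl⟩ := hU
  exact hrs n (hTU ⟨n, List.prefix_refl _⟩)

lemma aleph_one_le_mk_iff {α : Type} (s : Set α) :
    Cardinal.aleph 1 ≤ Cardinal.mk s ↔ ¬ s.Countable := by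
  rw [show Cardinal.aleph 1 = Order.succ Cardinal.aleph0 by
      rw [← Cardinal.aleph_zero, ← Cardinal.aleph_succ]; norm_num,
    Order.succ_le_iff, ← not_le, Cardinal.le_aleph0_iff_set_countable]

end CantorAux

open CantorAux in
theorem meager_cof_aleph_one_iff_nwd_cof_aleph_one' :
    (sInf {c | ∃ B : Set (Set (ℕ → Bool)), (∀ Y ∈ B, IsMeagre Y) ∧
      (∀ X : Set (ℕ → Bool), IsMeagre X → ∃ Y ∈ B, X ⊆ Y) ∧ Cardinal.mk B = c})
      = Cardinal.aleph 1 ↔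
    (sInf {c | ∃ 𝒯 : Set (Set (List Bool)), (∀ T ∈ 𝒯, PerfectTree T ∧ NwdTree T) ∧
      (∀ T : Set (List Bool), IsTree T → NwdTree T → ∃ U ∈ 𝒯, T ⊆ U) ∧ Cardinal.mk 𝒯 = c})
      = Cardinal.aleph 1 := by
  have hne₁ : {c | ∃ B : Set (Set (ℕ → Bool)), (∀ Y ∈ B, IsMeagre Y) ∧
      (∀ X : Set (ℕ → Bool), IsMeagre X → ∃ Y ∈ B, X ⊆ Y) ∧ Cardinal.mk B = c}.Nonempty :=
    ⟨Cardinal.mk {Y : Set (ℕ → Bool) | IsMeagre Y}, {Y | IsMeagre Y}, fun Y hY => hY,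
      fun X hX => ⟨X, hX, Set.Subset.rfl⟩, rfl⟩
  have hne₂ : {c | ∃ 𝒯 : Set (Set (List Bool)), (∀ T ∈ 𝒯, PerfectTree T ∧ NwdTree T) ∧
      (∀ T : Set (List Bool), IsTree T → NwdTree T → ∃ U ∈ 𝒯, T ⊆ U) ∧ Cardinal.mk 𝒯 = c}.Nonempty :=
    ⟨Cardinal.mk {U : Set (List Bool) | PerfectTree U ∧ NwdTree U},
      {U | PerfectTree U ∧ NwdTree U}, fun U hU => hU,
      fun T hT1 hT2 => ⟨hull T, ⟨perfectTree_hull T, nwdTree_hull hT1 hT2⟩, subset_hull T⟩, rfl⟩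
  have hlow₁ : ∀ c ∈ {c | ∃ B : Set (Set (ℕ → Bool)), (∀ Y ∈ B, IsMeagre Y) ∧
      (∀ X : Set (ℕ → Bool), IsMeagre X → ∃ Y ∈ B, X ⊆ Y) ∧ Cardinal.mk B = c},
      Cardinal.aleph 1 ≤ c := by
    rintro c ⟨B, h1, h2, rfl⟩
    rw [aleph_one_le_mk_iff]
    exact uncountable_meager_base h1 h2
  have hlow₂ : ∀ c ∈ {c | ∃ 𝒯 : Set (Set (List Bool)), (∀ T ∈ 𝒯, PerfectTree T ∧ NwdTree T) ∧
      (∀ T : Set (List Bool), IsTree T → NwdTree T → ∃ U ∈ 𝒯, T ⊆ U) ∧ Cardinal.mk 𝒯 = c},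
      Cardinal.aleph 1 ≤ c := by
    rintro c ⟨𝒯, h1, h2, rfl⟩
    rw [aleph_one_le_mk_iff]
    exact uncountable_tree_base h1 h2
  constructor
  · intro h
    obtain ⟨B, hB1, hB2, hBmk⟩ : Cardinal.aleph 1 ∈ _ := h ▸ csInf_mem hne₁
    obtain ⟨g, hg1, hg2⟩ := dirB hB1 hB2
    refine le_antisymm ?_ (le_csInf hne₂ hlow₂)
    have hmem₂ : Cardinal.mk (Set.range g) ∈ {c | ∃ 𝒯 : Set (Set (List Bool)),
        (∀ T ∈ 𝒯, PerfectTree T ∧ NwdTree T) ∧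
        (∀ T : Set (List Bool), IsTree T → NwdTree T → ∃ U ∈ 𝒯, T ⊆ U) ∧ Cardinal.mk 𝒯 = c} := by
      refine ⟨Set.range g, ?_, ?_, rfl⟩
      · rintro U ⟨p, rfl⟩
        exact hg1 p
      · intro T h1 h2
        obtain ⟨p, hp⟩ := hg2 T h1 h2
        exact ⟨g p, ⟨p, rfl⟩, hp⟩
    refine le_trans (csInf_le' hmem₂) ?_
    have hb : Cardinal.mk (↥B × ℕ) = Cardinal.aleph 1 := by
      rw [Cardinal.mk_prod, Cardinal.lift_id, Cardinal.lift_id, Cardinal.mk_nat, hBmk,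
        Cardinal.mul_eq_max (by rw [hBmk] at *; exact (Cardinal.aleph0_le_aleph 1)) le_rfl]
      exact sup_eq_left.mpr (Cardinal.aleph0_le_aleph 1)
    calc Cardinal.mk (Set.range g) ≤ Cardinal.mk (↥B × ℕ) := Cardinal.mk_range_le
    _ = Cardinal.aleph 1 := hb
  · intro h
    obtain ⟨𝒯, h𝒯1, h𝒯2, h𝒯mk⟩ : Cardinal.aleph 1 ∈ _ := h ▸ csInf_mem hne₂
    refine le_antisymm ?_ (le_csInf hne₁ hlow₁)
    have hmem₁ : Cardinal.mk (Set.range (fun U : ↥𝒯 => meagerOf (U : Set (List Bool))))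
        ∈ {c | ∃ B : Set (Set (ℕ → Bool)), (∀ Y ∈ B, IsMeagre Y) ∧
          (∀ X : Set (ℕ → Bool), IsMeagre X → ∃ Y ∈ B, X ⊆ Y) ∧ Cardinal.mk B = c} := by
      refine ⟨_, ?_, ?_, rfl⟩
      · rintro Y ⟨U, rfl⟩
        exact isMeagre_meagerOf (h𝒯1 U U.2).2
      · intro A hA
        obtain ⟨U, hU, hsub⟩ := dirA_cover h𝒯2 hA
        exact ⟨meagerOf U, ⟨⟨U, hU⟩, rfl⟩, hsub⟩
    refine le_trans (csInf_le' hmem₁) ?_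
    calc Cardinal.mk (Set.range (fun U : ↥𝒯 => meagerOf (U : Set (List Bool))))
        ≤ Cardinal.mk ↥𝒯 := Cardinal.mk_range_le
    _ = Cardinal.aleph 1 := h𝒯mk

/-- The cofinality of the meager ideal on Cantor space `2^ω`: the least cardinality of a
family of meager sets such that every meager set is contained in one of them. -/
def meagerCof : Cardinal :=
  sInf {c | ∃ B : Set (Set (ℕ → Bool)), (∀ Y ∈ B, IsMeagre Y) ∧
    (∀ X : Set (ℕ → Bool), IsMeagre X → ∃ Y ∈ B, X ⊆ Y) ∧ Cardinal.mk B = c}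

/-- The cofinality of the nowhere dense ideal, in its tree form: the least cardinality of a
family of perfect nowhere dense trees on `{0,1}` such that every nowhere dense tree is
contained in one of them. -/
def nwdTreeCof : Cardinal :=
  sInf {c | ∃ 𝒯 : Set (Set (List Bool)), (∀ T ∈ 𝒯, PerfectTree T ∧ NwdTree T) ∧
    (∀ T : Set (List Bool), IsTree T → NwdTree T → ∃ U ∈ 𝒯, T ⊆ U) ∧ Cardinal.mk 𝒯 = c}

/-- The cofinality of the meager ideal is `ℵ₁` iff the cofinality of the nowhere dense
ideal is `ℵ₁`. -/
theorem meager_cof_aleph_one_iff_nwd_cof_aleph_one :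
    meagerCof = Cardinal.aleph 1 ↔ nwdTreeCof = Cardinal.aleph 1 := by
  unfold meagerCof nwdTreeCof
  exact meager_cof_aleph_one_iff_nwd_cof_aleph_one'

end
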